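/- arXiv:1807.03281 — 2 statements merged into one kernel-verified Lean document; each statement's English description precedes it below -/
import Mathlib

section
/- Let P be a noetherian poset, meaning every nonempty subset of P contains a maximal element. Then the Alexandroff topological space of P is sober: every irreducible closed subset has a unique generic point. -/
/-- The Alexandroff topology on a preorder: opens are the upper sets (cosieves). -/
def alexandroff (P : Type*) [Preorder P] : TopologicalSpace P where
  IsOpen U := IsUpperSet U
  isOpen_univ := isUpperSet_univ
  isOpen_inter _ _ h₁ h₂ := h₁.inter h₂
  isOpen_sUnion _ h := isUpperSet_sUnion h

lemma alex_isOpen {P : Type*} [Preorder P] {U : Set P} :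
    @IsOpen P (alexandroff P) U ↔ IsUpperSet U := Iff.rfl

lemma alex_isClosed {P : Type*} [Preorder P] {Z : Set P} :
    @IsClosed P (alexandroff P) Z ↔ IsLowerSet Z := by
  letI : TopologicalSpace P := alexandroff P
  rw [← isOpen_compl_iff, alex_isOpen, isUpperSet_compl]

lemma alex_closure_singleton {P : Type*} [Preorder P] (y : P) :
    @closure P (alexandroff P) {y} = Set.Iic y := by
  letI : TopologicalSpace P := alexandroff P
  apply subset_antisymm
  · exact closure_minimal (by simp) (alex_isClosed.mpr (isLowerSet_Iic y))
  · have h1 : IsLowerSet (closure ({y} : Set P)) := alex_isClosed.mp isClosed_closure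
    have h2 : y ∈ closure ({y} : Set P) := subset_closure rfl
    exact fun x hx => h1 hx h2

/-- If P is a noetherian poset (every nonempty subset has a maximal
element), then the Alexandroff space of P is sober: every irreducible closed set has
a unique generic point. -/
theorem stmt_6 {P : Type*} [PartialOrder P]
    (hNoeth : ∀ S : Set P, S.Nonempty → ∃ m ∈ S, ∀ x ∈ S, m ≤ x → x = m) :
    ∀ Z : Set P, @IsClosed P (alexandroff P) Z → @IsIrreducible P (alexandroff P) Z →
      ∃! y : P, @closure P (alexandroff P) {y} = Z := by
  letI : TopologicalSpace P := alexandroff P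
  intro Z hZc hZi
  obtain ⟨m, hmZ, hmax⟩ := hNoeth Z hZi.nonempty
  have hlow : IsLowerSet Z := alex_isClosed.mp hZc
  have key : Z = Set.Iic m := by
    apply subset_antisymm
    · intro x hxZ
      have := hZi.2 (Set.Ici x) (Set.Ici m)
        (alex_isOpen.mpr (isUpperSet_Ici x)) (alex_isOpen.mpr (isUpperSet_Ici m))
        ⟨x, hxZ, le_refl x⟩ ⟨m, hmZ, le_refl m⟩
      obtain ⟨c, hcZ, hxc, hmc⟩ := this
      have : c = m := hmax c hcZ hmc
      exact this ▸ hxc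
    · exact fun x hx => hlow hx hmZ
  refine ⟨m, ?_, ?_⟩
  · show closure ({m} : Set P) = Z
    rw [alex_closure_singleton, key]
  · intro y hy
    have hy' : Set.Iic y = Set.Iic m := by
      rw [← alex_closure_singleton, hy, key]
    have h1 : y ≤ m := by rw [← Set.mem_Iic, ← hy']; exact Set.mem_Iic.mpr le_rfl
    have h2 : m ≤ y := by rw [← Set.mem_Iic, hy']; exact Set.mem_Iic.mpr le_rfl
    exact le_antisymm h1 h2
end

section
/- Let X be a scheme and let x, y be points of the underlying topological space of X such that x is a specialization of y (x lies in the closure of {y}). Then there exist a valuation ring V with fraction field K and a morphism of schemes Spec V → X sending the generic point of Spec V to y and the closed point of Spec V to x. -/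
open AlgebraicGeometry CategoryTheory

/-- If x is a specialization of y in a scheme X, there is a valuation
ring V and a morphism Spec V → X sending the generic point to y and the closed point
to x. -/
theorem stmt_16 (X : Scheme.{u}) (x y : X) (h : x ∈ closure ({y} : Set X)) :
    ∃ (V : Type u) (_ : CommRing V) (_ : IsDomain V) (_ : ValuationRing V)
      (f : Spec (CommRingCat.of V) ⟶ X),
      f.base (⟨⊥, Ideal.bot_prime⟩ : PrimeSpectrum V) = y ∧
      f.base (IsLocalRing.closedPoint V) = x := by
  have h' : y ⤳ x := specializes_iff_mem_closure.mpr h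
  let g : X.presheaf.stalk x ⟶ X.residueField y :=
    X.presheaf.stalkSpecializes h' ≫ X.residue y
  obtain ⟨A, hA, hA_local⟩ := IsLocalRing.exists_factor_valuationRing g.hom
  let g' : X.presheaf.stalk x ⟶ CommRingCat.of A :=
    CommRingCat.ofHom (g.hom.codRestrict A.toSubring hA)
  refine ⟨A, inferInstance, inferInstance, inferInstance,
    Spec.map g' ≫ X.fromSpecStalk x, ?_, ?_⟩
  · -- generic point goes to y
    have hinj : Function.Injective (algebraMap A (X.residueField y)) :=
      Subtype.coe_injective
    have hbot : (⟨⊥, Ideal.bot_prime⟩ : PrimeSpectrum A) =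
        (Spec.map (CommRingCat.ofHom (algebraMap A (X.residueField y)))).base
          (IsLocalRing.closedPoint (X.residueField y)) := by
      refine PrimeSpectrum.ext ?_
      show (⊥ : Ideal A) = Ideal.comap (algebraMap A (X.residueField y)) _
      have : (IsLocalRing.closedPoint (X.residueField y)).asIdeal = ⊥ :=
        Ideal.eq_bot_of_prime _
      rw [this]
      exact ((RingHom.injective_iff_ker_eq_bot _).mp hinj).symm
    rw [hbot]; erw [← Scheme.Hom.comp_apply (Spec.map (CommRingCat.ofHom (algebraMap A (X.residueField y)))) (Spec.map g' ≫ X.fromSpecStalk x)]; rw [← Category.assoc, ← Spec.map_comp]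
    have hcomp : (g'≫ CommRingCat.ofHom (algebraMap A (X.residueField y))) = g := rfl
    rw [hcomp]
    have : Spec.map g ≫ X.fromSpecStalk x = X.fromSpecResidueField y := by
      show Spec.map (X.presheaf.stalkSpecializes h' ≫ X.residue y) ≫ X.fromSpecStalk x = _
      rw [Spec.map_comp, Category.assoc, Scheme.SpecMap_stalkSpecializes_fromSpecStalk h']
      rfl
    rw [this]
    exact Scheme.fromSpecResidueField_apply y _
  · -- closed point goes to x
    erw [Scheme.Hom.comp_apply]
    have : (Spec.map g').base (IsLocalRing.closedPoint A) =
        IsLocalRing.closedPoint (X.presheaf.stalk x) :=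
      IsLocalRing.comap_closedPoint (S := A) (g.hom.codRestrict A.toSubring hA)
    rw [this, Scheme.fromSpecStalk_closedPoint]
end
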